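/- arXiv:1411.1455 — 8 statements merged into one kernel-verified Lean document; each statement's English description precedes it below -/
import Mathlib

section
/- Suppose the ranking function s satisfies additivity. Let D be a finite database, v ∈ D, j ∈ I an attribute, and θ ∈ V j. Let q be a query that returns v, and let q' be the query agreeing with q on every attribute except j, with q' j = {θ}. If q' does not return v, then v j ≠ θ. (This is the 'differential queries' inference of Section 4.1: a pair of queries differing only on attribute j, one returning v and the other not, proves that v's value on j is not θ.) -/
open Finset

variable {I α : Type*}

/-- A query assigns to each attribute a nonempty subset of its domain. -/
def ValidQuery (V : I → Finset α) (q : I → Finset α) : Prop :=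
  ∀ i, (q i).Nonempty ∧ q i ⊆ V i

/-- A tuple takes a value in the domain of each attribute. -/
def ValidTuple (V : I → Finset α) (t : I → α) : Prop :=
  ∀ i, t i ∈ V i

/-- `q` returns `v` as the top-1 result over the database `D`. -/
def Returns (s : (I → Finset α) → (I → α) → ℝ) (D : Finset (I → α))
    (q : I → Finset α) (v : I → α) : Prop :=
  ∀ t ∈ D, t ≠ v → s q v < s q t

/-- Additivity of the ranking function `s`. -/
def RankAdditive [DecidableEq I] (V : I → Finset α)
    (s : (I → Finset α) → (I → α) → ℝ) : Prop :=
  ∀ (q : I → Finset α) (t t' : I → α) (j : I),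
    ValidQuery V q → ValidTuple V t → ValidTuple V t' →
    s q t < s q t' →
    s (Function.update q j {t j}) t < s (Function.update q j {t j}) t'

/-- Monotonicity of the ranking function `s`. -/
def RankMonotonic (V : I → Finset α)
    (s : (I → Finset α) → (I → α) → ℝ) : Prop :=
  ∀ (q : I → Finset α) (i : I) (t t' : I → α),
    ValidQuery V q → ValidTuple V t → ValidTuple V t' →
    (∀ j, j ≠ i → t j = t' j) → t i ∈ q i → t' i ∉ q i →
    s q t < s q t'

/-- The linear ranking function with weights `w`. -/
noncomputable def linS [Fintype I] [DecidableEq α] (w : I → ℝ)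
    (q : I → Finset α) (t : I → α) : ℝ :=
  ∑ i, w i * (if t i ∈ q i then (0 : ℝ) else 1)

/-- differential queries. If `q` returns `v` but the query `q'`
agreeing with `q` everywhere except attribute `j`, where `q' j = {θ}`, does
not return `v`, then `v j ≠ θ`. -/
theorem differential_queries {I α : Type*} [Fintype I] [Nonempty I] [DecidableEq I]
    (V : I → Finset α) (hVne : ∀ i, (V i).Nonempty)
    (s : (I → Finset α) → (I → α) → ℝ) (hs : RankAdditive V s)
    (D : Finset (I → α)) (hD : ∀ t ∈ D, ValidTuple V t)
    (v : I → α) (hv : v ∈ D)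
    (j : I) (θ : α) (hθ : θ ∈ V j)
    (q : I → Finset α) (hq : ValidQuery V q)
    (hret : Returns s D q v)
    (q' : I → Finset α) (hq' : q' = Function.update q j {θ})
    (hnret : ¬ Returns s D q' v) :
    v j ≠ θ := by
  intro hvj
  apply hnret
  intro t ht htv
  subst hvj
  rw [hq']
  exact hs q v t j hq (hD v hv) (hD t ht) (hret t ht htv)
end

section
/- Suppose the ranking function s satisfies additivity. Let D be a finite database, v ∈ D, q a query that returns v, and t any tuple. Let j_1, …, j_h be an enumeration (without repetition) of exactly those attributes j ∈ I with q j ≠ {t j}. Define queries q_0 = q and, for i = 1, …, h, let q_i agree with q_{i−1} on every attribute except j_{h−i+1}, with q_i j_{h−i+1} = {t j_{h−i+1}} (so q_h is the point query of t). If q_h does not return v, then there exists an index i ∈ {0, …, h−1} such that q_i returns v, q_{i+1} does not return v, and moreover v j_{h−i} ≠ t j_{h−i}. (This is the correctness of one iteration of Algorithms Q&I-Point and Q&I-IN: a pair of adjacent queries in the constructed sequence forms differential queries and certifies that v differs from the inserted tuple t on the attribute on which they differ.) -/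
open Finset

variable {I α : Type*}

lemma exists_switch (P : ℕ → Prop) : ∀ h : ℕ, P 0 → ¬ P h →
    ∃ i < h, P i ∧ ¬ P (i+1) := by
  intro h
  induction h with
  | zero => intro h0 hh; exact absurd h0 hh
  | succ n ih =>
    intro h0 hh
    by_cases hn : P n
    · exact ⟨n, Nat.lt_succ_self n, hn, hh⟩
    · obtain ⟨i, hi, h1, h2⟩ := ih h0 hn
      exact ⟨i, hi.trans (Nat.lt_succ_self n), h1, h2⟩

/-- correctness of one iteration of Q&I-Point / Q&I-IN.
Walking from `q` (which returns `v`) to the point query of `t` one attribute at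
a time, if the final query does not return `v` then some adjacent pair forms
differential queries certifying that `v` differs from `t` on the corresponding
attribute. -/
theorem adjacent_differential_pair {I α : Type*} [Fintype I] [Nonempty I] [DecidableEq I]
    (V : I → Finset α) (hVne : ∀ i, (V i).Nonempty)
    (s : (I → Finset α) → (I → α) → ℝ) (hs : RankAdditive V s)
    (D : Finset (I → α)) (hD : ∀ u ∈ D, ValidTuple V u)
    (v : I → α) (hv : v ∈ D) (hvval : ValidTuple V v)
    (q : I → Finset α) (hq : ValidQuery V q) (hret : Returns s D q v)
    (t : I → α) (ht : ValidTuple V t)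
    (h : ℕ) (js : Fin h → I) (hinj : Function.Injective js)
    (hjs : ∀ i : I, (∃ k, js k = i) ↔ q i ≠ ({t i} : Finset α))
    (Q : ℕ → (I → Finset α)) (hQ0 : Q 0 = q)
    (hQstep : ∀ i (hi : i < h),
      Q (i + 1) = Function.update (Q i) (js ⟨h - 1 - i, by omega⟩)
        {t (js ⟨h - 1 - i, by omega⟩)})
    (hlast : ¬ Returns s D (Q h) v) :
    ∃ i, ∃ hi : i < h, Returns s D (Q i) v ∧ ¬ Returns s D (Q (i + 1)) v ∧
      v (js ⟨h - 1 - i, by omega⟩) ≠ t (js ⟨h - 1 - i, by omega⟩) := by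
  have hQvalid : ∀ i, i ≤ h → ValidQuery V (Q i) := by
    intro i
    induction i with
    | zero => intro _; rw [hQ0]; exact hq
    | succ n ih =>
      intro hn
      rw [hQstep n (by omega)]
      intro k
      rcases eq_or_ne k (js ⟨h - 1 - n, by omega⟩) with hk | hk
      · subst hk
        simp [Function.update_self]
        exact ht _
      · rw [Function.update_of_ne hk]
        exact ih (by omega) k
  obtain ⟨i, hi, h1, h2⟩ := exists_switch (fun i => Returns s D (Q i) v) h
    (by show Returns s D (Q 0) v; rw [hQ0]; exact hret) hlast
  refine ⟨i, hi, h1, h2, ?_⟩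
  intro hvt
  apply h2
  intro u hu hune
  rw [hQstep i hi, ← hvt]
  exact hs (Q i) v u _ (hQvalid i (by omega)) hvval (hD u hu) (h1 u hu hune)
end

section
/- Suppose the ranking function s satisfies monotonicity. Then for every query q and every tuple t' for which there exists at least one attribute j ∈ I with t' j ∉ q j, there exists a tuple t with t i ∈ q i for every i ∈ I and s q t < s q t'. (Every tuple not fully matching a query is strictly out-ranked by some fully matching tuple; proved by replacing the mismatched attribute values one at a time and applying monotonicity along the chain.) -/
open Finset

variable {I α : Type*}

/-- under monotonicity, every tuple not fully matching a query is
strictly out-ranked by some fully matching tuple. -/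
theorem mismatched_tuple_outranked {I α : Type*} [Fintype I] [Nonempty I] [DecidableEq I]
    (V : I → Finset α) (hVne : ∀ i, (V i).Nonempty)
    (s : (I → Finset α) → (I → α) → ℝ) (hs : RankMonotonic V s)
    (q : I → Finset α) (hq : ValidQuery V q)
    (t' : I → α) (ht' : ValidTuple V t')
    (hmiss : ∃ j, t' j ∉ q j) :
    ∃ t : I → α, ValidTuple V t ∧ (∀ i, t i ∈ q i) ∧ s q t < s q t' := by
  classical
  have aux : ∀ n (u : I → α), ValidTuple V u →
      (Finset.univ.filter (fun i => u i ∉ q i)).card ≤ n →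
      ∃ t, ValidTuple V t ∧ (∀ i, t i ∈ q i) ∧ (t = u ∨ s q t < s q u) := by
    intro n
    induction n with
    | zero =>
      intro u hu hcard
      refine ⟨u, hu, fun i => ?_, Or.inl rfl⟩
      by_contra h
      have : i ∈ Finset.univ.filter (fun i => u i ∉ q i) := by simp [h]
      have := Finset.card_pos.2 ⟨i, this⟩
      omega
    | succ n ih =>
      intro u hu hcard
      by_cases hall : ∀ i, u i ∈ q i
      · exact ⟨u, hu, hall, Or.inl rfl⟩
      · push_neg at hall
        obtain ⟨j, hj⟩ := hall
        obtain ⟨v, hv⟩ := (hq j).1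
        set u' := Function.update u j v with hu'def
        have hu' : ValidTuple V u' := by
          intro i
          rcases eq_or_ne i j with rfl | h
          · simpa [u'] using (hq i).2 hv
          · simpa [u', Function.update_of_ne h] using hu i
        have hlt : s q u' < s q u :=
          hs q j u' u hq hu' hu (fun k hk => Function.update_of_ne hk _ _)
            (by simpa [u'] using hv) hj
        have hjmem : j ∈ Finset.univ.filter (fun i => u i ∉ q i) := by simp [hj]
        have hsub : Finset.univ.filter (fun i => u' i ∉ q i) ⊆
            (Finset.univ.filter (fun i => u i ∉ q i)).erase j := by
          intro i hi
          simp only [Finset.mem_filter, Finset.mem_univ, true_and] at hi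
          rcases eq_or_ne i j with rfl | h
          · exact absurd (by simpa [u'] using hv) hi
          · simp only [Finset.mem_erase, Finset.mem_filter, Finset.mem_univ, true_and]
            exact ⟨h, by simpa [u', Function.update_of_ne h] using hi⟩
        have hcard' : (Finset.univ.filter (fun i => u' i ∉ q i)).card ≤ n := by
          have h1 := Finset.card_le_card hsub
          have h2 := Finset.card_erase_of_mem hjmem
          omega
        obtain ⟨t, ht, hmatch, h⟩ := ih u' hu' hcard'
        refine ⟨t, ht, hmatch, Or.inr ?_⟩
        rcases h with rfl | h
        · exact hlt
        · exact lt_trans h hlt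
  obtain ⟨t, ht, hmatch, h⟩ := aux _ t' ht' le_rfl
  rcases h with rfl | h
  · obtain ⟨j, hj⟩ := hmiss
    exact absurd (hmatch j) hj
  · exact ⟨t, ht, hmatch, h⟩
end

section
/- Suppose the ranking function s satisfies monotonicity. Let D be a finite database, u ∈ D, and let q be the point query of u, i.e., q i = {u i} for every attribute i ∈ I. Then q returns u: s q u < s q t for every t ∈ D with t ≠ u. (This is the claim used in Algorithm Q&I-Point that the point query exactly matching a tuple ranks that tuple first, so if the final query q_h of the constructed sequence returns v instead of the inserted tuple t, then v and t must be identical.) -/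
open Finset

variable {I α : Type*}

/-- under monotonicity, the point query exactly matching a tuple
`u ∈ D` returns `u`. -/
theorem point_query_returns_its_tuple {I α : Type*} [Fintype I] [Nonempty I]
    [DecidableEq I]
    (V : I → Finset α) (hVne : ∀ i, (V i).Nonempty)
    (s : (I → Finset α) → (I → α) → ℝ) (hs : RankMonotonic V s)
    (D : Finset (I → α)) (hD : ∀ t ∈ D, ValidTuple V t)
    (u : I → α) (hu : u ∈ D)
    (q : I → Finset α) (hq : q = fun i => ({u i} : Finset α)) :
    Returns s D q u := by
  classical
  subst hq
  set q : I → Finset α := fun i => ({u i} : Finset α) with hqdef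
  have hqv : ValidQuery V q := fun i => ⟨Finset.singleton_nonempty _, by
    simpa [q] using hD u hu i⟩
  have huv : ValidTuple V u := hD u hu
  have key : ∀ n (t : I → α), ValidTuple V t → t ≠ u →
      (Finset.univ.filter (fun i => t i ≠ u i)).card ≤ n → s q u < s q t := by
    intro n
    induction n with
    | zero =>
      intro t htv hne hc
      exfalso
      apply hne
      funext j
      by_contra hj
      have : j ∈ Finset.univ.filter (fun i => t i ≠ u i) := by simp [hj]
      have := Finset.card_pos.2 ⟨j, this⟩
      omega
    | succ n ih =>
      intro t htv hne hc
      have hex : ∃ i, t i ≠ u i := by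
        by_contra h
        push_neg at h
        exact hne (funext h)
      obtain ⟨i, hi⟩ := hex
      set t' := Function.update t i (u i) with ht'
      have ht'v : ValidTuple V t' := by
        intro j
        by_cases hji : j = i
        · subst hji; simpa [t'] using huv j
        · simpa [t', Function.update_of_ne hji] using htv j
      have h1 : s q t' < s q t := by
        apply hs q i t' t hqv ht'v htv
        · intro j hj; simp [t', Function.update_of_ne hj]
        · simp [t', q]
        · simp [q, hi]
      by_cases ht'u : t' = u
      · rw [ht'u] at h1; exact h1
      · have hsub : Finset.univ.filter (fun j => t' j ≠ u j) ⊆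
            (Finset.univ.filter (fun j => t j ≠ u j)).erase i := by
          intro j hj
          simp only [Finset.mem_filter, Finset.mem_univ, true_and] at hj
          have hji : j ≠ i := by
            intro h; subst h; simp [t'] at hj
          rw [Finset.mem_erase]
          refine ⟨hji, ?_⟩
          simp only [Finset.mem_filter, Finset.mem_univ, true_and]
          rwa [ht', Function.update_of_ne hji] at hj
        have hmem : i ∈ Finset.univ.filter (fun j => t j ≠ u j) := by simp [hi]
        have hcard : (Finset.univ.filter (fun j => t' j ≠ u j)).card ≤ n := by
          have h2 := Finset.card_le_card hsub
          have h3 := Finset.card_erase_of_mem hmem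
          omega
        exact lt_trans (ih t' ht'v ht'u hcard) h1
  intro t ht hne
  exact key (Finset.univ.filter (fun i => t i ≠ u i)).card t (hD t ht) hne le_rfl
end

section
/- Suppose the ranking function s satisfies monotonicity. Let v be a tuple and let D consist of v together with, for every attribute j ∈ I and every value θ ∈ V j with θ ≠ v j, the tuple v_{j,θ} that agrees with v on every attribute except j and has v_{j,θ} j = θ. Then for every point query q other than the point query of v (i.e., with q j ≠ {v j} for at least one attribute j), there exists t ∈ D with t ≠ v and s q t < s q v; in particular, q does not return v. (This is the worst-case database construction in the proof of Theorem 1: in this database the only point query that can return v is the one exactly matching v on all attributes.) -/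
open Finset

variable {I α : Type*}

/-- the worst-case database of Theorem 1. With `D` consisting of
`v` together with all single-attribute perturbations of `v`, every point query
other than the point query of `v` is strictly beaten by some other tuple, hence
does not return `v`. -/
theorem worst_case_database {I α : Type*} [Fintype I] [Nonempty I] [DecidableEq I]
    [DecidableEq α]
    (V : I → Finset α) (hVne : ∀ i, (V i).Nonempty)
    (s : (I → Finset α) → (I → α) → ℝ) (hs : RankMonotonic V s)
    (v : I → α) (hvval : ValidTuple V v)
    (D : Finset (I → α))
    (hD : ∀ t : I → α, t ∈ D ↔
      (t = v ∨ ∃ j θ, θ ∈ V j ∧ θ ≠ v j ∧ t = Function.update v j θ))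
    (q : I → Finset α) (hq : ValidQuery V q)
    (hpt : ∀ i, ∃ a, q i = {a})
    (hne : ∃ j, q j ≠ ({v j} : Finset α)) :
    (∃ t ∈ D, t ≠ v ∧ s q t < s q v) ∧ ¬ Returns s D q v := by
  obtain ⟨j, hj⟩ := hne
  obtain ⟨a, ha⟩ := hpt j
  have haV : a ∈ V j := (hq j).2 (ha ▸ Finset.mem_singleton_self a)
  have hav : a ≠ v j := by
    intro h; exact hj (by rw [ha, h])
  set t := Function.update v j a with ht
  have htD : t ∈ D := (hD t).2 (Or.inr ⟨j, a, haV, hav, rfl⟩)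
  have htv : t ≠ v := by
    intro h
    have := congrFun h j
    simp [ht, Function.update_self] at this
    exact hav this
  have htval : ValidTuple V t := by
    intro i
    by_cases hi : i = j
    · subst hi; simpa [ht] using haV
    · simpa [ht, Function.update_of_ne hi] using hvval i
  have hscore : s q t < s q v := by
    apply hs q j t v hq htval hvval
    · intro k hk; simp [ht, Function.update_of_ne hk]
    · simp [ht, ha]
    · simp [ha, Ne.symm hav]
  refine ⟨⟨t, htD, htv, hscore⟩, ?_⟩
  intro hret
  exact absurd (hret t htD htv) (not_lt.2 hscore.le)
end

section
/- The linear ranking function with positive weights satisfies additivity: for all queries q, all tuples t, t', and every attribute j ∈ I, if s q t < s q t', then s q' t < s q' t', where q' is the query agreeing with q on every attribute except j and with q' j = {t j}. -/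
open Finset

variable {I α : Type*}

/-- the linear ranking function with positive weights satisfies
additivity. -/
theorem linear_ranking_additive {I α : Type*} [Fintype I] [Nonempty I] [DecidableEq I]
    [DecidableEq α]
    (V : I → Finset α) (hVne : ∀ i, (V i).Nonempty)
    (w : I → ℝ) (hw : ∀ i, 0 < w i) :
    RankAdditive V (linS w) := by
  intro q t t' j _ _ _ hlt
  have key : linS w (Function.update q j {t j}) t + linS w q t' ≤
      linS w q t + linS w (Function.update q j {t j}) t' := by
    unfold linS
    rw [← Finset.sum_add_distrib, ← Finset.sum_add_distrib]
    apply Finset.sum_le_sum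
    intro i _
    by_cases h : i = j
    · subst h
      have hwi := (hw i).le
      simp only [Function.update_self, Finset.mem_singleton]
      split_ifs <;> simp_all <;> nlinarith
    · rw [Function.update_of_ne h]
  linarith
end

section
/- Let s be the linear ranking function with positive weights and let b ∈ I be an attribute. Assume the weight-gap condition: for all subsets S₁, S₂ ⊆ I \ {b} with S₁ ≠ S₂, |Σ_{i∈S₁} w i − Σ_{i∈S₂} w i| > w b. Let q be any query and let t, t' be tuples whose mismatch sets away from b differ, i.e., {j ∈ I : j ≠ b and t j ∉ q j} ≠ {j ∈ I : j ≠ b and t' j ∉ q j}. Then for all tuples u, u' agreeing with t, t' respectively on every attribute except possibly b: s q t < s q t' if and only if s q u < s q u'. (The relative rank of two such tuples is independent of their values on attribute b; this is the core of the proof of Theorem 3 on the infeasibility of rank-based inference for query-only adversaries.) -/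
open Finset

variable {I α : Type*}

lemma lin_split {I α : Type*} [Fintype I] [DecidableEq I] [DecidableEq α]
    (w : I → ℝ) (b : I) (q : I → Finset α) (t : I → α) :
    linS w q t = (∑ i ∈ Finset.univ.filter (fun j => j ≠ b ∧ t j ∉ q j), w i)
      + (if t b ∈ q b then 0 else w b) := by
  have h1 : linS w q t = ∑ i, (if t i ∉ q i then w i else 0) := by
    unfold linS
    apply Finset.sum_congr rfl
    intro i _
    by_cases h : t i ∈ q i <;> simp [h]
  rw [h1, ← Finset.sum_filter]
  have h2 : Finset.univ.filter (fun j => t j ∉ q j)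
      = Finset.univ.filter (fun j => j ≠ b ∧ t j ∉ q j)
        ∪ Finset.univ.filter (fun j => j = b ∧ t j ∉ q j) := by
    ext j
    by_cases hj : j = b <;> simp [hj]
  rw [h2, Finset.sum_union]
  · congr 1
    by_cases hb : t b ∈ q b
    · rw [Finset.filter_false_of_mem, Finset.sum_empty]
      · simp [hb]
      · rintro j _ ⟨rfl, hj⟩; exact hj hb
    · have h3 : Finset.univ.filter (fun j => j = b ∧ t j ∉ q j) = {b} := by
        ext j
        simp only [Finset.mem_filter, Finset.mem_univ, true_and, Finset.mem_singleton]
        constructor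
        · rintro ⟨rfl, _⟩; rfl
        · rintro rfl; exact ⟨rfl, hb⟩
      rw [h3, Finset.sum_singleton]
      simp [hb]
  · rw [Finset.disjoint_left]
    intro j hj hj'
    simp only [Finset.mem_filter] at hj hj'
    exact hj.2.1 hj'.2.1

/-- under the weight-gap condition on attribute `b`, the relative
rank of two tuples whose mismatch sets away from `b` differ is independent of
their values on `b`. -/
theorem rank_independent_of_b {I α : Type*} [Fintype I] [Nonempty I] [DecidableEq I]
    [DecidableEq α]
    (V : I → Finset α) (hVne : ∀ i, (V i).Nonempty)
    (w : I → ℝ) (hw : ∀ i, 0 < w i) (b : I)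
    (hgap : ∀ S₁ S₂ : Finset I, b ∉ S₁ → b ∉ S₂ → S₁ ≠ S₂ →
      w b < |∑ i ∈ S₁, w i - ∑ i ∈ S₂, w i|)
    (q : I → Finset α) (hq : ValidQuery V q)
    (t t' : I → α) (ht : ValidTuple V t) (ht' : ValidTuple V t')
    (hdiff : (Finset.univ.filter fun j => j ≠ b ∧ t j ∉ q j) ≠
             (Finset.univ.filter fun j => j ≠ b ∧ t' j ∉ q j))
    (u u' : I → α) (hu : ValidTuple V u) (hu' : ValidTuple V u')
    (hut : ∀ i, i ≠ b → u i = t i) (hut' : ∀ i, i ≠ b → u' i = t' i) :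
    (linS w q t < linS w q t' ↔ linS w q u < linS w q u') := by
  set A := ∑ i ∈ Finset.univ.filter (fun j => j ≠ b ∧ t j ∉ q j), w i with hA
  set B := ∑ i ∈ Finset.univ.filter (fun j => j ≠ b ∧ t' j ∉ q j), w i with hB
  have hgapAB : w b < |A - B| := by
    apply hgap
    · simp
    · simp
    · exact hdiff
  have hfu : Finset.univ.filter (fun j => j ≠ b ∧ u j ∉ q j)
      = Finset.univ.filter (fun j => j ≠ b ∧ t j ∉ q j) := by
    apply Finset.filter_congr
    intro j _
    by_cases hj : j = b
    · simp [hj]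
    · simp [hj, hut j hj]
  have hfu' : Finset.univ.filter (fun j => j ≠ b ∧ u' j ∉ q j)
      = Finset.univ.filter (fun j => j ≠ b ∧ t' j ∉ q j) := by
    apply Finset.filter_congr
    intro j _
    by_cases hj : j = b
    · simp [hj]
    · simp [hj, hut' j hj]
  have key : ∀ e e' : ℝ, 0 ≤ e → e ≤ w b → 0 ≤ e' → e' ≤ w b →
      (A + e < B + e' ↔ A < B) := by
    intro e e' h1 h2 h3 h4
    rcases abs_cases (A - B) with ⟨heq, _⟩ | ⟨heq, _⟩ <;> rw [heq] at hgapAB <;>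
      constructor <;> intro h <;> linarith
  have ebound : ∀ (v : I → α), 0 ≤ (if v b ∈ q b then (0:ℝ) else w b) ∧
      (if v b ∈ q b then (0:ℝ) else w b) ≤ w b := by
    intro v
    by_cases h : v b ∈ q b <;> simp [h, (hw b).le]
  rw [lin_split w b q t, lin_split w b q t', lin_split w b q u, lin_split w b q u',
    hfu, hfu', ← hA, ← hB]
  rw [key _ _ (ebound t).1 (ebound t).2 (ebound t').1 (ebound t').2,
    key _ _ (ebound u).1 (ebound u).2 (ebound u').1 (ebound u').2]
end

section
/- (Theorem 3 instantiation.) Suppose every attribute domain is Boolean, i.e., |V i| = 2 for all i ∈ I. Let s be the linear ranking function with positive weights, and let b ∈ I satisfy the weight-gap condition: for all subsets S₁, S₂ ⊆ I \ {b} with S₁ ≠ S₂, |Σ_{i∈S₁} w i − Σ_{i∈S₂} w i| > w b. Let D be a finite database in which any two distinct tuples differ on some attribute other than b, let v ∈ D, and let D' be obtained from D by replacing v with a tuple v' that agrees with v on every attribute except possibly b (so D' also has the property that any two distinct tuples differ on some attribute other than b). Then for every point query q: (i) there is a unique tuple of D minimizing s q, and likewise for D'; and (ii) q returns v over D if and only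 if q returns v' over D', and for every t ∈ D with t ≠ v, q returns t over D if and only if q returns t over D'. Hence the top-1 answer of every point query is unchanged by any modification of v's value on attribute b, so no query-only adversary can infer v b from point-query answers over such a database. -/
open Finset

variable {I α : Type*}

section Aux
variable {I α : Type*} [Fintype I] [DecidableEq I] [DecidableEq α]

/-- sum of weights over off-`b` mismatched attributes -/
noncomputable def gS (w : I → ℝ) (q : I → Finset α) (b : I) (t : I → α) : ℝ :=
  ∑ i ∈ (Finset.univ.erase b).filter (fun i => t i ∉ q i), w i

lemma linS_eq (w : I → ℝ) (q : I → Finset α) (b : I) (t : I → α) :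
    linS w q t = gS w q b t + w b * (if t b ∈ q b then (0:ℝ) else 1) := by
  have h1 : gS w q b t = ∑ i ∈ Finset.univ.erase b, w i * (if t i ∈ q i then (0:ℝ) else 1) := by
    rw [gS, Finset.sum_filter]
    apply Finset.sum_congr rfl
    intro i _
    by_cases h : t i ∈ q i <;> simp [h]
  rw [linS, h1, Finset.sum_erase_add _ _ (Finset.mem_univ b)]

lemma gS_ne (V : I → Finset α) (hV2 : ∀ i, (V i).card = 2)
    (w : I → ℝ) (q : I → Finset α) (b : I)
    (t t' : I → α) (ht : ∀ i, t i ∈ V i) (ht' : ∀ i, t' i ∈ V i)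
    (j : I) (hjb : j ≠ b) (hjne : t j ≠ t' j)
    (hqsub : q j ⊆ V j) (a : α) (ha : q j = {a}) :
    (Finset.univ.erase b).filter (fun i => t i ∉ q i) ≠
      (Finset.univ.erase b).filter (fun i => t' i ∉ q i) := by
  have hja : a ∈ V j := hqsub (by simp [ha])
  have hjmem : j ∈ Finset.univ.erase b := by simp [hjb]
  -- exactly one of t j, t' j equals a
  have hone : (t j = a ∧ t' j ≠ a) ∨ (t j ≠ a ∧ t' j = a) := by
    by_cases h1 : t j = a
    · exact Or.inl ⟨h1, fun h2 => hjne (h1.trans h2.symm)⟩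
    · refine Or.inr ⟨h1, ?_⟩
      by_contra h2
      have hsub : ({a, t j, t' j} : Finset α) ⊆ V j := by
        intro x hx
        simp only [Finset.mem_insert, Finset.mem_singleton] at hx
        rcases hx with rfl | rfl | rfl
        · exact hja
        · exact ht j
        · exact ht' j
      have hna : a ∉ ({t j, t' j} : Finset α) := by
        simp only [Finset.mem_insert, Finset.mem_singleton]
        push_neg
        exact ⟨fun h => h1 h.symm, fun h => h2 h.symm⟩
      have hnt : t j ∉ ({t' j} : Finset α) := by simpa using hjne
      have hcard : ({a, t j, t' j} : Finset α).card = 3 := by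
        rw [Finset.card_insert_of_notMem hna, Finset.card_insert_of_notMem hnt,
          Finset.card_singleton]
      have := Finset.card_le_card hsub
      rw [hcard, hV2 j] at this
      omega
  intro heq
  rcases hone with ⟨h1, h2⟩ | ⟨h1, h2⟩
  · have hj1 : j ∉ (Finset.univ.erase b).filter (fun i => t i ∉ q i) := by
      simp [ha, h1]
    have hj2 : j ∈ (Finset.univ.erase b).filter (fun i => t' i ∉ q i) := by
      simp [ha, h2, hjb]
    rw [heq] at hj1; exact hj1 hj2
  · have hj1 : j ∈ (Finset.univ.erase b).filter (fun i => t i ∉ q i) := by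
      simp [ha, h1, hjb]
    have hj2 : j ∉ (Finset.univ.erase b).filter (fun i => t' i ∉ q i) := by
      simp [ha, h2]
    rw [heq] at hj1; exact hj2 hj1

end Aux

section Aux2
variable {I α : Type*} [Fintype I] [DecidableEq I] [DecidableEq α]

lemma gS_gap (V : I → Finset α) (hV2 : ∀ i, (V i).card = 2)
    (w : I → ℝ) (b : I)
    (hgap : ∀ S₁ S₂ : Finset I, b ∉ S₁ → b ∉ S₂ → S₁ ≠ S₂ →
      w b < |∑ i ∈ S₁, w i - ∑ i ∈ S₂, w i|)
    (q : I → Finset α) (hqv : ∀ i, q i ⊆ V i) (hpt : ∀ i, ∃ a, q i = {a})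
    (t t' : I → α) (ht : ∀ i, t i ∈ V i) (ht' : ∀ i, t' i ∈ V i)
    (hdiff : ∃ j, j ≠ b ∧ t j ≠ t' j) :
    w b < |gS w q b t - gS w q b t'| := by
  obtain ⟨j, hjb, hjne⟩ := hdiff
  obtain ⟨a, ha⟩ := hpt j
  exact hgap _ _ (by simp) (by simp)
    (gS_ne V hV2 w q b t t' ht ht' j hjb hjne (hqv j) a ha)

lemma cmp_iff (V : I → Finset α) (hV2 : ∀ i, (V i).card = 2)
    (w : I → ℝ) (hw : ∀ i, 0 < w i) (b : I)
    (hgap : ∀ S₁ S₂ : Finset I, b ∉ S₁ → b ∉ S₂ → S₁ ≠ S₂ →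
      w b < |∑ i ∈ S₁, w i - ∑ i ∈ S₂, w i|)
    (q : I → Finset α) (hqv : ∀ i, q i ⊆ V i) (hpt : ∀ i, ∃ a, q i = {a})
    (t t' : I → α) (ht : ∀ i, t i ∈ V i) (ht' : ∀ i, t' i ∈ V i)
    (hdiff : ∃ j, j ≠ b ∧ t j ≠ t' j) :
    linS w q t < linS w q t' ↔ gS w q b t < gS w q b t' := by
  have gap := gS_gap V hV2 w b hgap q hqv hpt t t' ht ht' hdiff
  have h0 : 0 < w b := hw b
  rw [linS_eq w q b t, linS_eq w q b t']
  have hx1 : (0:ℝ) ≤ (if t b ∈ q b then (0:ℝ) else 1) ∧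
      (if t b ∈ q b then (0:ℝ) else 1) ≤ 1 := by split_ifs <;> norm_num
  have hx2 : (0:ℝ) ≤ (if t' b ∈ q b then (0:ℝ) else 1) ∧
      (if t' b ∈ q b then (0:ℝ) else 1) ≤ 1 := by split_ifs <;> norm_num
  have m1 : 0 ≤ w b * (if t b ∈ q b then (0:ℝ) else 1) := mul_nonneg h0.le hx1.1
  have m1' : w b * (if t b ∈ q b then (0:ℝ) else 1) ≤ w b := by nlinarith [hx1.2]
  have m2 : 0 ≤ w b * (if t' b ∈ q b then (0:ℝ) else 1) := mul_nonneg h0.le hx2.1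
  have m2' : w b * (if t' b ∈ q b then (0:ℝ) else 1) ≤ w b := by nlinarith [hx2.2]
  rcases lt_abs.mp gap with h | h
  · constructor <;> intro hlt <;> linarith
  · constructor <;> intro hlt <;> linarith

lemma uniq_min (V : I → Finset α) (hV2 : ∀ i, (V i).card = 2)
    (w : I → ℝ) (hw : ∀ i, 0 < w i) (b : I)
    (hgap : ∀ S₁ S₂ : Finset I, b ∉ S₁ → b ∉ S₂ → S₁ ≠ S₂ →
      w b < |∑ i ∈ S₁, w i - ∑ i ∈ S₂, w i|)
    (q : I → Finset α) (hqv : ∀ i, q i ⊆ V i) (hpt : ∀ i, ∃ a, q i = {a})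
    (E : Finset (I → α)) (hE : E.Nonempty)
    (hval : ∀ t ∈ E, ∀ i, t i ∈ V i)
    (hd : ∀ t ∈ E, ∀ t' ∈ E, t ≠ t' → ∃ j, j ≠ b ∧ t j ≠ t' j) :
    ∃! a, a ∈ E ∧ ∀ t ∈ E, t ≠ a → linS w q a < linS w q t := by
  obtain ⟨a, haE, hmin⟩ := E.exists_min_image (linS w q) hE
  have hprop : ∀ t ∈ E, t ≠ a → linS w q a < linS w q t := by
    intro t ht hta
    have hdiff := hd a haE t ht (fun h => hta h.symm)
    have hdiff' : ∃ j, j ≠ b ∧ t j ≠ a j := by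
      obtain ⟨j, h1, h2⟩ := hdiff; exact ⟨j, h1, h2.symm⟩
    have hgne : gS w q b a ≠ gS w q b t := by
      intro h
      have := gS_gap V hV2 w b hgap q hqv hpt a t (hval a haE) (hval t ht) hdiff
      rw [h] at this
      simp at this
      linarith [hw b]
    rcases lt_or_gt_of_ne hgne with h | h
    · exact (cmp_iff V hV2 w hw b hgap q hqv hpt a t (hval a haE) (hval t ht) hdiff).mpr h
    · exact absurd (hmin t ht)
        (not_le.mpr ((cmp_iff V hV2 w hw b hgap q hqv hpt t a (hval t ht) (hval a haE)
          hdiff').mpr h))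
  refine ⟨a, ⟨haE, hprop⟩, ?_⟩
  rintro a' ⟨ha'E, hmin'⟩
  by_contra hne
  have h1 := hprop a' ha'E hne
  have h2 := hmin' a haE (fun h => hne h.symm)
  linarith

end Aux2

/-- Theorem 3 instantiation: with Boolean domains, the weight-gap
condition on `b`, and a database whose tuples pairwise differ away from `b`,
the top-1 answer of every point query is unchanged when `v` is replaced by a
tuple `v'` agreeing with `v` except possibly on `b`. -/
theorem qonly_infeasibility {I α : Type*} [Fintype I] [Nonempty I] [DecidableEq I]
    [DecidableEq α]
    (V : I → Finset α) (hV2 : ∀ i, (V i).card = 2)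
    (w : I → ℝ) (hw : ∀ i, 0 < w i) (b : I)
    (hgap : ∀ S₁ S₂ : Finset I, b ∉ S₁ → b ∉ S₂ → S₁ ≠ S₂ →
      w b < |∑ i ∈ S₁, w i - ∑ i ∈ S₂, w i|)
    (D : Finset (I → α)) (hDval : ∀ t ∈ D, ValidTuple V t)
    (hDdist : ∀ t ∈ D, ∀ t' ∈ D, t ≠ t' → ∃ j, j ≠ b ∧ t j ≠ t' j)
    (v : I → α) (hv : v ∈ D)
    (v' : I → α) (hv'val : ValidTuple V v') (hagree : ∀ i, i ≠ b → v' i = v i)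
    (D' : Finset (I → α)) [DecidableEq (I → α)] (hD' : D' = insert v' (D.erase v))
    (q : I → Finset α) (hq : ValidQuery V q) (hpt : ∀ i, ∃ a, q i = {a}) :
    ((∃! a, a ∈ D ∧ ∀ t ∈ D, t ≠ a → linS w q a < linS w q t) ∧
     (∃! a, a ∈ D' ∧ ∀ t ∈ D', t ≠ a → linS w q a < linS w q t)) ∧
    (Returns (linS w) D q v ↔ Returns (linS w) D' q v') ∧
    (∀ t ∈ D, t ≠ v → (Returns (linS w) D q t ↔ Returns (linS w) D' q t)) := by

  classical
  have hqv : ∀ i, q i ⊆ V i := fun i => (hq i).2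
  have hgv : gS w q b v' = gS w q b v := by
    unfold gS
    congr 1
    apply Finset.filter_congr
    intro i hi
    rw [hagree i (Finset.mem_erase.mp hi).1]
  have hD'mem : ∀ t, t ∈ D' ↔ t = v' ∨ t ∈ D.erase v := by
    intro t; simp [hD']
  have ht_v' : ∀ t ∈ D.erase v, ∃ j, j ≠ b ∧ t j ≠ v' j := by
    intro t ht
    obtain ⟨htv, htD⟩ := Finset.mem_erase.mp ht
    obtain ⟨j, hjb, hjne⟩ := hDdist t htD v hv htv
    exact ⟨j, hjb, by rw [hagree j hjb]; exact hjne⟩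
  have hne_v' : ∀ t ∈ D.erase v, t ≠ v' := by
    intro t ht h
    obtain ⟨j, _, hj⟩ := ht_v' t ht
    exact hj (by rw [h])
  have hD'val : ∀ t ∈ D', ∀ i, t i ∈ V i := by
    intro t ht
    rw [hD'mem] at ht
    rcases ht with rfl | ht
    · exact hv'val
    · exact hDval t (Finset.mem_of_mem_erase ht)
  have hD'dist : ∀ t ∈ D', ∀ t' ∈ D', t ≠ t' → ∃ j, j ≠ b ∧ t j ≠ t' j := by
    intro t ht t' ht' hne
    rw [hD'mem] at ht ht'
    rcases ht with rfl | ht <;> rcases ht' with rfl | ht'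
    · exact absurd rfl hne
    · obtain ⟨j, hjb, hj⟩ := ht_v' t' ht'
      exact ⟨j, hjb, hj.symm⟩
    · exact ht_v' t ht
    · exact hDdist t (Finset.mem_of_mem_erase ht) t' (Finset.mem_of_mem_erase ht') hne
  have cmpE : ∀ t ∈ D.erase v, (linS w q v < linS w q t ↔ linS w q v' < linS w q t) := by
    intro t ht
    obtain ⟨htv, htD⟩ := Finset.mem_erase.mp ht
    have hd1 := hDdist v hv t htD (Ne.symm htv)
    have hd2 : ∃ j, j ≠ b ∧ v' j ≠ t j := by
      obtain ⟨j, hjb, hj⟩ := ht_v' t ht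
      exact ⟨j, hjb, hj.symm⟩
    rw [cmp_iff V hV2 w hw b hgap q hqv hpt v t (hDval v hv) (hDval t htD) hd1,
      cmp_iff V hV2 w hw b hgap q hqv hpt v' t hv'val (hDval t htD) hd2, hgv]
  refine ⟨⟨?_, ?_⟩, ?_, ?_⟩
  · exact uniq_min V hV2 w hw b hgap q hqv hpt D ⟨v, hv⟩ hDval hDdist
  · exact uniq_min V hV2 w hw b hgap q hqv hpt D' ⟨v', by rw [hD'mem]; left; rfl⟩
      hD'val hD'dist
  · constructor
    · intro hR t ht htne
      rw [hD'mem] at ht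
      rcases ht with rfl | htE
      · exact absurd rfl htne
      · exact (cmpE t htE).mp (hR t (Finset.mem_of_mem_erase htE) (Finset.mem_erase.mp htE).1)
    · intro hR t ht htne
      have htE : t ∈ D.erase v := Finset.mem_erase.mpr ⟨htne, ht⟩
      exact (cmpE t htE).mpr (hR t (by rw [hD'mem]; right; exact htE) (hne_v' t htE))
  · intro t₀ ht₀ ht₀v
    have ht₀E : t₀ ∈ D.erase v := Finset.mem_erase.mpr ⟨ht₀v, ht₀⟩
    have hc : linS w q t₀ < linS w q v ↔ linS w q t₀ < linS w q v' := by
      rw [cmp_iff V hV2 w hw b hgap q hqv hpt t₀ v (hDval t₀ ht₀) (hDval v hv)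
          (hDdist t₀ ht₀ v hv ht₀v),
        cmp_iff V hV2 w hw b hgap q hqv hpt t₀ v' (hDval t₀ ht₀) hv'val (ht_v' t₀ ht₀E), hgv]
    constructor
    · intro hR t ht htne
      rw [hD'mem] at ht
      rcases ht with rfl | htE
      · exact hc.mp (hR v hv (Ne.symm ht₀v))
      · exact hR t (Finset.mem_of_mem_erase htE) htne
    · intro hR t ht htne
      by_cases h : t = v
      · subst h
        exact hc.mpr (hR v' (by rw [hD'mem]; left; rfl) (Ne.symm (hne_v' t₀ ht₀E)))
      · exact hR t (by rw [hD'mem]; right; exact Finset.mem_erase.mpr ⟨h, ht⟩) htne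
end
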